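/- The state graph of the Towers of Bucharest with n disks is a simple path on all 3^n configurations, with endpoints the configurations where all disks are on P_0 and all disks are on P_2. -/

import Mathlib

/-- A configuration of the Towers of Bucharest/Hanoi with `n` disks assigns to
each disk `D_{d+1}` (disk `d : Fin n`; smaller index means smaller disk) the
peg `c d : Fin 3` on which it lies.  Disks on the same peg are necessarily
stacked in size order. -/
abbrev HanoiConf (n : ℕ) := Fin n → Fin 3

/-- A legal move of the Towers of Bucharest: some disk `d` which is topmost on
its peg (no smaller disk on the same peg) moves to an *adjacent* peg
(`P₀ ↔ P₁` or `P₁ ↔ P₂`) carrying no smaller disk; all other disks stay. -/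
def bucharestMove {n : ℕ} (c c' : HanoiConf n) : Prop :=
  ∃ d : Fin n,
    c d ≠ c' d ∧
    ((c d : ℕ) + 1 = (c' d : ℕ) ∨ (c' d : ℕ) + 1 = (c d : ℕ)) ∧
    (∀ e, e ≠ d → c e = c' e) ∧
    (∀ e, e < d → c e ≠ c d ∧ c e ≠ c' d)

lemma move_symm {n} {a b : HanoiConf n} (h : bucharestMove a b) : bucharestMove b a := by
  obtain ⟨d, h1, h2, h3, h4⟩ := h
  refine ⟨d, Ne.symm h1, h2.symm, fun e he => (h3 e he).symm, fun e he => ?_⟩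
  obtain ⟨p, q⟩ := h4 e he
  rw [h3 e (ne_of_lt he)] at p q
  exact ⟨q, p⟩

lemma snoc_const {n} (x : Fin 3) :
    (Fin.snoc (fun _ => x) x : Fin (n+1) → Fin 3) = fun _ => x := by
  funext i
  refine Fin.lastCases ?_ (fun j => ?_) i <;> simp

lemma move_snoc {n} {a b : HanoiConf n} (p : Fin 3) (h : bucharestMove a b) :
    bucharestMove (Fin.snoc a p) (Fin.snoc b p) := by
  obtain ⟨d, h1, h2, h3, h4⟩ := h
  refine ⟨d.castSucc, by simpa using h1, by simpa using h2, fun e => ?_, fun e he => ?_⟩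
  · refine Fin.lastCases ?_ (fun j => ?_) e <;> intro he
    · simp
    · simp only [Fin.snoc_castSucc]
      exact h3 j (fun hh => he (by rw [hh]))
  · obtain ⟨j, rfl⟩ := Fin.exists_castSucc_eq.2 (he.trans (Fin.castSucc_lt_last d)).ne
    simp only [Fin.snoc_castSucc]
    exact h4 j (Fin.castSucc_lt_castSucc_iff.mp he)

lemma move_last {n} (p q r : Fin 3) (hpq : p ≠ q)
    (hadj : (p : ℕ) + 1 = q ∨ (q : ℕ) + 1 = p) (hrp : r ≠ p) (hrq : r ≠ q) :
    bucharestMove (Fin.snoc (fun _ => r) p : HanoiConf (n+1)) (Fin.snoc (fun _ => r) q) := by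
  refine ⟨Fin.last n, by simpa using hpq, by simpa using hadj, fun e => ?_, fun e he => ?_⟩
  · refine Fin.lastCases ?_ (fun j => ?_) e <;> intro he
    · exact absurd rfl he
    · simp
  · obtain ⟨j, rfl⟩ := Fin.exists_castSucc_eq.2 (ne_of_lt he)
    simpa using ⟨hrp, hrq⟩
lemma move_unique {n} {c c₁ c₂ : HanoiConf n} {d₁ d₂ : Fin n}
    (a₁ : (c d₁ : ℕ) + 1 = (c₁ d₁ : ℕ) ∨ (c₁ d₁ : ℕ) + 1 = (c d₁ : ℕ))
    (f₁ : ∀ e, e ≠ d₁ → c e = c₁ e)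
    (g₁ : ∀ e, e < d₁ → c e ≠ c d₁ ∧ c e ≠ c₁ d₁)
    (a₂ : (c d₂ : ℕ) + 1 = (c₂ d₂ : ℕ) ∨ (c₂ d₂ : ℕ) + 1 = (c d₂ : ℕ))
    (f₂ : ∀ e, e ≠ d₂ → c e = c₂ e)
    (g₂ : ∀ e, e < d₂ → c e ≠ c d₂ ∧ c e ≠ c₂ d₂)
    (hsum : (c d₁ : ℕ) + (c₁ d₁ : ℕ) = (c d₂ : ℕ) + (c₂ d₂ : ℕ)) : c₁ = c₂ := by
  have hval : ∀ (a b : Fin 3), a ≠ b → (a : ℕ) ≠ (b : ℕ) := fun a b h hh => h (Fin.ext hh)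
  have hd : d₁ = d₂ := by
    rcases lt_trichotomy d₁ d₂ with h | h | h
    · obtain ⟨u, v⟩ := g₂ d₁ h
      have := hval _ _ u; have := hval _ _ v
      have := (c d₁).isLt; have := (c₁ d₁).isLt; have := (c d₂).isLt; have := (c₂ d₂).isLt
      omega
    · exact h
    · obtain ⟨u, v⟩ := g₁ d₂ h
      have := hval _ _ u; have := hval _ _ v
      have := (c d₁).isLt; have := (c₁ d₁).isLt; have := (c d₂).isLt; have := (c₂ d₂).isLt
      omega
  subst hd
  funext e
  by_cases he : e = d₁
  · subst he; exact Fin.ext (by omega)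
  · rw [← f₁ e he, f₂ e he]

lemma move_sum {n} {c c' : HanoiConf n} {d : Fin n}
    (a : (c d : ℕ) + 1 = (c' d : ℕ) ∨ (c' d : ℕ) + 1 = (c d : ℕ)) :
    (c d : ℕ) + (c' d : ℕ) = 1 ∨ (c d : ℕ) + (c' d : ℕ) = 3 := by
  have := (c d).isLt; have := (c' d).isLt; omega

lemma degree_le_two {n} {c c₁ c₂ c₃ : HanoiConf n}
    (h₁ : bucharestMove c c₁) (h₂ : bucharestMove c c₂) (h₃ : bucharestMove c c₃) :
    c₁ = c₂ ∨ c₁ = c₃ ∨ c₂ = c₃ := by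
  obtain ⟨d₁, e₁, a₁, f₁, g₁⟩ := h₁
  obtain ⟨d₂, e₂, a₂, f₂, g₂⟩ := h₂
  obtain ⟨d₃, e₃, a₃, f₃, g₃⟩ := h₃
  rcases move_sum a₁ with s₁ | s₁ <;> rcases move_sum a₂ with s₂ | s₂ <;>
    rcases move_sum a₃ with s₃ | s₃
  · exact Or.inl (move_unique a₁ f₁ g₁ a₂ f₂ g₂ (by omega))
  · exact Or.inl (move_unique a₁ f₁ g₁ a₂ f₂ g₂ (by omega))
  · exact Or.inr (Or.inl (move_unique a₁ f₁ g₁ a₃ f₃ g₃ (by omega)))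
  · exact Or.inr (Or.inr (move_unique a₂ f₂ g₂ a₃ f₃ g₃ (by omega)))
  · exact Or.inr (Or.inr (move_unique a₂ f₂ g₂ a₃ f₃ g₃ (by omega)))
  · exact Or.inr (Or.inl (move_unique a₁ f₁ g₁ a₃ f₃ g₃ (by omega)))
  · exact Or.inl (move_unique a₁ f₁ g₁ a₂ f₂ g₂ (by omega))
  · exact Or.inl (move_unique a₁ f₁ g₁ a₂ f₂ g₂ (by omega))

lemma move_from_const {n} {c₁ c₂ : HanoiConf n} (x : Fin 3) (hx : (x:ℕ) = 0 ∨ (x:ℕ) = 2)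
    (h₁ : bucharestMove (fun _ => x) c₁) (h₂ : bucharestMove (fun _ => x) c₂) : c₁ = c₂ := by
  obtain ⟨d₁, e₁, a₁, f₁, g₁⟩ := h₁
  obtain ⟨d₂, e₂, a₂, f₂, g₂⟩ := h₂
  refine move_unique a₁ f₁ g₁ a₂ f₂ g₂ ?_
  have := (c₁ d₁).isLt; have := (c₂ d₂).isLt
  simp only at a₁ a₂ ⊢
  omega
def hanoiList : (n : ℕ) → List (HanoiConf n)
  | 0 => [fun _ => 0]
  | n+1 =>
      ((hanoiList n).map (Fin.snoc · 0)) ++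
      (((hanoiList n).reverse.map (Fin.snoc · 1)) ++ ((hanoiList n).map (Fin.snoc · 2)))

lemma snoc_injective {n} (p : Fin 3) :
    Function.Injective (fun a : HanoiConf n => Fin.snoc a p : HanoiConf n → HanoiConf (n+1)) :=
  fun a b h => by
    have := congrArg Fin.init h
    simpa [Fin.init_snoc] using this

lemma last_of_mem_map_snoc {n} {l : List (HanoiConf n)} {p : Fin 3} {x : HanoiConf (n+1)}
    (h : x ∈ l.map (fun a => Fin.snoc a p)) : x (Fin.last n) = p := by
  obtain ⟨a, -, rfl⟩ := List.mem_map.1 h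
  simp

lemma hanoi_spec (n : ℕ) :
    (hanoiList n).length = 3 ^ n ∧ (hanoiList n).Nodup ∧
    (hanoiList n).head? = some (fun _ => 0) ∧
    (hanoiList n).getLast? = some (fun _ => 2) ∧
    (hanoiList n).Chain' bucharestMove := by
  induction n with
  | zero =>
    refine ⟨rfl, by simp [hanoiList], rfl, ?_, List.isChain_singleton _⟩
    show some _ = some _
    congr 1
    funext i; exact i.elim0
  | succ n ih =>
    obtain ⟨hlen, hnd, hhd, hlast, hch⟩ := ih
    set L := hanoiList n with hL
    have hLne : L ≠ [] := by
      intro h; rw [h] at hlen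
      have : 0 < 3 ^ n := pow_pos (by norm_num) n
      simp at hlen; omega
    constructor
    · simp only [hanoiList, List.length_append, List.length_map, List.length_reverse, ← hL, hlen]
      rw [pow_succ]; ring
    refine ⟨?_, ?_, ?_, ?_⟩
    · -- Nodup
      simp only [hanoiList, ← hL]
      rw [List.nodup_append', List.nodup_append']
      refine ⟨hnd.map (snoc_injective 0), ⟨(List.nodup_reverse.2 hnd).map (snoc_injective 1),
        hnd.map (snoc_injective 2), ?_⟩, ?_⟩
      · intro x hx hx'
        have h1 := last_of_mem_map_snoc hx
        have h2 := last_of_mem_map_snoc hx'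
        rw [h1] at h2; exact absurd h2 (by decide)
      · intro x hx hx'
        have h1 := last_of_mem_map_snoc hx
        rcases List.mem_append.1 hx' with h | h
        · have h2 := last_of_mem_map_snoc h
          rw [h1] at h2; exact absurd h2 (by decide)
        · have h2 := last_of_mem_map_snoc h
          rw [h1] at h2; exact absurd h2 (by decide)
    · -- head?
      simp only [hanoiList, ← hL, List.head?_append, List.head?_map, hhd, Option.map_some]
      rw [snoc_const]
      rfl
    · -- getLast?
      simp only [hanoiList, ← hL, List.getLast?_append, List.getLast?_map, hlast,
        Option.map_some]
      rw [snoc_const]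
      rfl
    · -- Chain'
      simp only [hanoiList, ← hL]
      show List.IsChain _ _
      rw [List.isChain_append, List.isChain_append]
      refine ⟨(List.isChain_map _).2 (hch.imp fun a b h => move_snoc 0 h),
        ⟨(List.isChain_map _).2 ((List.isChain_reverse).2 (hch.imp fun a b h =>
            move_snoc 1 (move_symm h))),
         (List.isChain_map _).2 (hch.imp fun a b h => move_snoc 2 h), ?_⟩, ?_⟩
      · -- junction B → C
        intro x hx y hy
        rw [List.getLast?_map, List.getLast?_reverse, hhd] at hx
        rw [List.head?_map, hhd] at hy
        simp only [Option.map_some, Option.mem_def, Option.some.injEq] at hx hy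
        subst hx; subst hy
        exact move_last 1 2 0 (by decide) (Or.inl rfl) (by decide) (by decide)
      · -- junction A → (B ++ C)
        intro x hx y hy
        rw [List.getLast?_map, hlast] at hx
        rw [List.head?_append, List.head?_map, List.head?_reverse, hlast] at hy
        simp only [Option.map_some, Option.mem_def, Option.some.injEq, Option.some_or] at hx hy
        subst hx; subst hy
        exact move_last 0 1 2 (by decide) (Or.inl rfl) (by decide) (by decide)


/-- The state graph of the Towers of Bucharest with `n` disks is a simple path
through all `3^n` configurations, whose endpoints are the all-on-`P₀` and
all-on-`P₂` configurations: the configurations can be listed without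
repetition so that the first is all-on-`P₀`, the last is all-on-`P₂`,
consecutive entries are joined by legal moves, and every legal move joins
consecutive entries of the list. -/
theorem bucharest_state_graph_is_path (n : ℕ) :
    ∃ l : List (HanoiConf n),
      l.length = 3 ^ n ∧ l.Nodup ∧
      l.head? = some (fun _ => 0) ∧ l.getLast? = some (fun _ => 2) ∧
      l.Chain' bucharestMove ∧
      ∀ c c' : HanoiConf n, bucharestMove c c' ↔
        ∃ k, k + 1 < l.length ∧
          ((l.getD k default = c ∧ l.getD (k + 1) default = c') ∨
           (l.getD k default = c' ∧ l.getD (k + 1) default = c)) := by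
  obtain ⟨hlen, hnd, hhd, hlast, hch⟩ := hanoi_spec n
  set l := hanoiList n with hLdef
  have hlne : l ≠ [] := by
    intro h; rw [h] at hlen
    have : 0 < 3 ^ n := pow_pos (by norm_num) n
    simp at hlen; omega
  have hcons : ∀ k, k + 1 < l.length → bucharestMove (l.getD k default) (l.getD (k+1) default) := by
    intro k hk
    have h1 : k < l.length - 1 := by omega
    have := List.isChain_iff_getElem.1 hch k (by omega)
    rw [List.getD_eq_getElem _ _ (by omega), List.getD_eq_getElem _ _ hk]
    simpa [List.get_eq_getElem] using this
  refine ⟨l, hlen, hnd, hhd, hlast, hch, fun c c' => ⟨fun h => ?_, fun ⟨k, hk, hor⟩ => ?_⟩⟩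
  · -- forward
    obtain ⟨d, -, -, -, -⟩ := id h
    have hn : 0 < n := d.pos
    have h3 : 3 ≤ l.length := by
      rw [hlen]
      calc 3 = 3 ^ 1 := rfl
      _ ≤ 3 ^ n := Nat.pow_le_pow_right (by norm_num) hn
    have hmem : ∀ x : HanoiConf n, x ∈ l := by
      have hcard : l.toFinset = Finset.univ :=
        Finset.eq_univ_of_card _ (by
          rw [List.toFinset_card_of_nodup hnd, hlen, Fintype.card_fun]; simp)
      intro x; rw [← List.mem_toFinset, hcard]; exact Finset.mem_univ x
    obtain ⟨k, hk, hget⟩ := List.mem_iff_getElem.1 (hmem c)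
    have hgetD : l.getD k default = c := by rw [List.getD_eq_getElem _ _ hk, hget]
    by_cases h0 : k = 0
    · subst h0
      have hc0 : c = fun _ => 0 := by
        have := List.head?_eq_head hlne
        rw [hhd] at this
        rw [← hget, List.getElem_zero ..]
        exact (Option.some_inj.1 this).symm
      have m2 := hcons 0 (by omega)
      rw [hgetD] at m2
      have := move_from_const (0 : Fin 3) (Or.inl rfl) (hc0 ▸ h) (hc0 ▸ m2)
      exact ⟨0, by omega, Or.inl ⟨hgetD, this ▸ rfl⟩⟩
    by_cases hL : k = l.length - 1
    · have hc2 : c = fun _ => 2 := by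
        have := List.getLast?_eq_getLast hlne
        rw [hlast, List.getLast_eq_getElem] at this
        rw [← hget]
        have h2' : some (l[l.length - 1]) = some (fun _ => (2:Fin 3)) := this.symm
        subst hL
        exact Option.some_inj.1 h2'
      have m1 := hcons (k-1) (by omega)
      have hkk : k - 1 + 1 = k := by omega
      rw [hkk, hgetD] at m1
      have m1' := move_symm m1
      have := move_from_const (2 : Fin 3) (Or.inr rfl) (hc2 ▸ h) (hc2 ▸ m1')
      refine ⟨k - 1, by omega, Or.inr ⟨this ▸ rfl, by rw [hkk]; exact hgetD⟩⟩
    · -- interior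
      have hk1 : k + 1 < l.length := by omega
      have hkpos : 0 < k := Nat.pos_of_ne_zero h0
      have m1 := hcons (k-1) (by omega)
      have hkk : k - 1 + 1 = k := by omega
      rw [hkk, hgetD] at m1
      have m1' := move_symm m1
      have m2 := hcons k hk1
      rw [hgetD] at m2
      have hab : l.getD (k-1) default ≠ l.getD (k+1) default := by
        rw [List.getD_eq_getElem _ _ (by omega), List.getD_eq_getElem _ _ hk1]
        intro hh
        have := (List.Nodup.getElem_inj_iff hnd).mp hh
        omega
      rcases degree_le_two h m1' m2 with h1 | h1 | h1
      · exact ⟨k - 1, by omega, Or.inr ⟨h1 ▸ rfl, by rw [hkk]; exact hgetD⟩⟩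
      · exact ⟨k, hk1, Or.inl ⟨hgetD, h1 ▸ rfl⟩⟩
      · exact absurd h1 hab
  · -- backward
    rcases hor with ⟨h1, h2⟩ | ⟨h1, h2⟩
    · rw [← h1, ← h2]; exact hcons k hk
    · rw [← h1, ← h2]; exact move_symm (hcons k hk)
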